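/- arXiv:2004.13196 — 3 statements merged into one kernel-verified Lean document; each statement's English description precedes it below -/
import Mathlib

section
/- The k-th moment of distance on L(2;1) = ℝP³ satisfies the asymptotic I(2,k) ~ (2/k) · (π/2)^k as k → ∞; that is, the ratio I(2,k) / ( (2/k) · (π/2)^k ) tends to 1 as k → ∞. -/
open MeasureTheory

/-- The `k`-th moment of distance on the homogeneous lens space `L(n;1)`,
expressed as an explicit integral over a fundamental domain in join coordinates. -/
noncomputable def momentI (n k : ℕ) : ℝ :=
  ((n : ℝ) ^ 2 / (2 * Real.pi ^ 2)) *
    ∫ θ₂ in (-(Real.pi / n))..(Real.pi / n),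
      ∫ θ₁ in (-(Real.pi / n))..(Real.pi / n),
        ∫ η in (0 : ℝ)..(Real.pi / 2),
          (Real.arccos (Real.cos θ₁ * Real.cos η)) ^ k * Real.cos η * Real.sin η

open Real intervalIntegral Set Filter

lemma sub1 (c : ℝ) (k : ℕ) :
    (∫ η in (0:ℝ)..(π/2), Real.arccos (c * Real.cos η) ^ k * Real.cos η * Real.sin η)
      = ∫ u in (0:ℝ)..1, Real.arccos (c * u) ^ k * u := by
  have hg : Continuous (fun u : ℝ => Real.arccos (c * u) ^ k * u) := by
    exact ((Real.continuous_arccos.comp (continuous_const.mul continuous_id)).pow k).mul continuous_id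
  have := intervalIntegral.integral_comp_smul_deriv (a := 0) (b := π/2)
    (f := Real.cos) (f' := fun x => -Real.sin x)
    (fun x _ => Real.hasDerivAt_cos x) ((Real.continuous_sin).neg.continuousOn) hg
  simp only [Real.cos_zero, Real.cos_pi_div_two] at this
  rw [intervalIntegral.integral_symm (0:ℝ) 1] at this
  have h2 : (∫ x in (0:ℝ)..(π/2), (-Real.sin x) • ((fun u : ℝ => Real.arccos (c * u) ^ k * u) ∘ Real.cos) x)
      = -∫ η in (0:ℝ)..(π/2), Real.arccos (c * Real.cos η) ^ k * Real.cos η * Real.sin η := by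
    rw [← intervalIntegral.integral_neg]
    congr 1; ext x; simp [Function.comp]; ring
  rw [h2] at this
  linarith [this]

lemma sub2 (θ : ℝ) (hθ : θ ∈ Set.Ico 0 (π/2)) (k : ℕ) :
    (∫ u in (0:ℝ)..1, Real.arccos (Real.cos θ * u) ^ k * u)
      = (1 / Real.cos θ ^ 2) * ∫ s in θ..(π/2), s ^ k * Real.cos s * Real.sin s := by
  have hc : 0 < Real.cos θ := Real.cos_pos_of_mem_Ioo ⟨by linarith [hθ.1, Real.pi_pos], hθ.2⟩
  have hg : Continuous (fun u : ℝ => Real.arccos (Real.cos θ * u) ^ k * u) := by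
    exact ((Real.continuous_arccos.comp (continuous_const.mul continuous_id)).pow k).mul continuous_id
  have key := intervalIntegral.integral_comp_smul_deriv (a := θ) (b := π/2)
    (f := fun s => Real.cos s / Real.cos θ) (f' := fun s => -Real.sin s / Real.cos θ)
    (fun x _ => (Real.hasDerivAt_cos x).div_const _) ((Real.continuous_sin.neg.div_const _).continuousOn) hg
  have e1 : Real.cos θ / Real.cos θ = 1 := div_self hc.ne'
  simp only [Real.cos_pi_div_two, zero_div, e1] at key
  rw [intervalIntegral.integral_symm (0:ℝ) 1] at key
  have h2 : (∫ x in θ..(π/2), (-Real.sin x / Real.cos θ) • ((fun u : ℝ => Real.arccos (Real.cos θ * u) ^ k * u) ∘ (fun s => Real.cos s / Real.cos θ)) x)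
      = -((1 / Real.cos θ ^ 2) * ∫ s in θ..(π/2), s ^ k * Real.cos s * Real.sin s) := by
    rw [← intervalIntegral.integral_const_mul, ← intervalIntegral.integral_neg]
    apply intervalIntegral.integral_congr
    intro x hx
    have hx' : x ∈ Set.Icc θ (π/2) := by
      rwa [Set.uIcc_of_le hθ.2.le] at hx
    have harc : Real.arccos (Real.cos x) = x :=
      Real.arccos_cos (le_trans hθ.1 hx'.1) (le_trans hx'.2 (by linarith [Real.pi_pos]))
    simp only [Function.comp]
    rw [mul_div_cancel₀ _ hc.ne', harc]
    have hc2 : Real.cos θ ^ 2 * (Real.cos θ)⁻¹ ^ 2 = 1 := by rw [← mul_pow, mul_inv_cancel₀ hc.ne', one_pow]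
    field_simp
    linear_combination (-(x ^ k * Real.cos x * Real.sin x)) * hc2
  rw [h2] at key
  linarith [key]

lemma D_eq (k : ℕ) :
    (∫ θ in (0:ℝ)..(π/2), ∫ u in (0:ℝ)..1, Real.arccos (Real.cos θ * u) ^ k * u)
      = ∫ s in (0:ℝ)..(π/2), s ^ k * Real.sin s ^ 2 := by
  have pi2 : (0:ℝ) < π/2 := by positivity
  set g : ℝ → ℝ := fun s => s ^ k * Real.cos s * Real.sin s with hg_def
  set F : ℝ → ℝ := fun a => ∫ s in a..(π/2), g s with hF_def
  set A : ℝ → ℝ := fun θ => ∫ u in (0:ℝ)..1, Real.arccos (Real.cos θ * u) ^ k * u with hA_def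
  set p : ℝ → ℝ := fun θ => θ ^ k * Real.sin θ ^ 2 with hp_def
  have gcont : Continuous g := by fun_prop
  have pcont : Continuous p := by fun_prop
  have Acont : Continuous A := by
    apply intervalIntegral.continuous_parametric_intervalIntegral_of_continuous'
      (f := fun θ u => Real.arccos (Real.cos θ * u) ^ k * u)
    exact ((Real.continuous_arccos.comp
      ((Real.continuous_cos.comp continuous_fst).mul continuous_snd)).pow k).mul continuous_snd
  have hF : ∀ a : ℝ, HasDerivAt F (-(g a)) a := by
    intro a
    exact intervalIntegral.integral_hasDerivAt_left
      (gcont.intervalIntegrable _ _)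
      (gcont.stronglyMeasurableAtFilter _ _)
      gcont.continuousAt
  have Fcont : Continuous F := continuous_iff_continuousAt.2 fun a => (hF a).continuousAt
  -- the key identity on [0, b] for b < π/2
  have key : ∀ b ∈ Set.Ioo (0:ℝ) (π/2),
      (∫ θ in (0:ℝ)..b, A θ) = Real.tan b * F b + ∫ θ in (0:ℝ)..b, p θ := by
    intro b hb
    have hcosb : ∀ θ ∈ Set.Icc (0:ℝ) b, 0 < Real.cos θ := fun θ hθ =>
      Real.cos_pos_of_mem_Ioo ⟨by linarith [hθ.1, Real.pi_pos], lt_of_le_of_lt hθ.2 hb.2⟩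
    have hH : ∀ θ ∈ Set.Icc (0:ℝ) b,
        HasDerivAt (fun x => Real.tan x * F x) (1 / Real.cos θ ^ 2 * F θ - p θ) θ := by
      intro θ hθ
      have hc := hcosb θ hθ
      have hT : HasDerivAt Real.tan (1 / Real.cos θ ^ 2) θ := Real.hasDerivAt_tan hc.ne'
      have := hT.mul (hF θ)
      refine this.congr_deriv ?_
      rw [Real.tan_eq_sin_div_cos]
      field_simp [hp_def, hg_def]
      ring
    have hcont2 : ContinuousOn (fun θ => 1 / Real.cos θ ^ 2 * F θ - p θ) (Set.Icc 0 b) := by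
      apply ContinuousOn.sub _ pcont.continuousOn
      apply ContinuousOn.mul _ Fcont.continuousOn
      exact continuousOn_const.div ((Real.continuous_cos.pow 2).continuousOn)
        (fun θ hθ => pow_ne_zero _ (hcosb θ hθ).ne')
    have hint : IntervalIntegrable (fun θ => 1 / Real.cos θ ^ 2 * F θ - p θ) volume 0 b := by
      apply ContinuousOn.intervalIntegrable
      rwa [Set.uIcc_of_le hb.1.le]
    have ftc := intervalIntegral.integral_eq_sub_of_hasDerivAt
      (f := fun x => Real.tan x * F x)
      (f' := fun θ => 1 / Real.cos θ ^ 2 * F θ - p θ)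
      (fun θ hθ => hH θ (by rwa [Set.uIcc_of_le hb.1.le] at hθ)) hint
    have h0 : Real.tan 0 * F 0 = 0 := by simp [Real.tan_zero]
    have e1 : (∫ θ in (0:ℝ)..b, A θ) = ∫ θ in (0:ℝ)..b, 1 / Real.cos θ ^ 2 * F θ := by
      apply intervalIntegral.integral_congr
      intro θ hθ
      rw [Set.uIcc_of_le hb.1.le] at hθ
      exact sub2 θ ⟨hθ.1, lt_of_le_of_lt hθ.2 hb.2⟩ k
    have e2 : (∫ θ in (0:ℝ)..b, 1 / Real.cos θ ^ 2 * F θ)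
        = (∫ θ in (0:ℝ)..b, (1 / Real.cos θ ^ 2 * F θ - p θ)) + ∫ θ in (0:ℝ)..b, p θ := by
      rw [← intervalIntegral.integral_add hint (pcont.intervalIntegrable _ _)]
      congr 1; ext θ; ring
    rw [e1, e2, ftc]
    simp [Real.tan_zero]
  -- limits as b → π/2⁻
  have hmem : Set.Ioo (0:ℝ) (π/2) ∈ nhdsWithin (π/2) (Set.Iio (π/2)) :=
    Ioo_mem_nhdsLT_of_mem ⟨pi2, le_rfl⟩
  have t1 : Tendsto (fun b => ∫ θ in (0:ℝ)..b, A θ) (nhdsWithin (π/2) (Set.Iio (π/2)))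
      (nhds (∫ θ in (0:ℝ)..(π/2), A θ)) := by
    have hc : Continuous (fun b : ℝ => ∫ θ in (0:ℝ)..b, A θ) :=
      intervalIntegral.continuous_parametric_intervalIntegral_of_continuous
        (f := fun _ t => A t) (Acont.comp continuous_snd) continuous_id
    exact (hc.tendsto _).mono_left nhdsWithin_le_nhds
  have tp : Tendsto (fun b => ∫ θ in (0:ℝ)..b, p θ) (nhdsWithin (π/2) (Set.Iio (π/2)))
      (nhds (∫ θ in (0:ℝ)..(π/2), p θ)) := by
    have hc : Continuous (fun b : ℝ => ∫ θ in (0:ℝ)..b, p θ) :=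
      intervalIntegral.continuous_parametric_intervalIntegral_of_continuous
        (f := fun _ t => p t) (pcont.comp continuous_snd) continuous_id
    exact (hc.tendsto _).mono_left nhdsWithin_le_nhds
  have tF : Tendsto (fun b => Real.tan b * F b) (nhdsWithin (π/2) (Set.Iio (π/2))) (nhds 0) := by
    apply tendsto_of_tendsto_of_tendsto_of_le_of_le'
      (g := fun _ => (0:ℝ))
      (h := fun b => (π/2) ^ k * (Real.sin b * Real.cos b / (1 + Real.sin b)))
    · exact tendsto_const_nhds
    · have hca : ContinuousAt (fun b => (π/2) ^ k * (Real.sin b * Real.cos b / (1 + Real.sin b))) (π/2) := by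
        apply ContinuousAt.mul continuousAt_const
        apply ContinuousAt.div (by fun_prop) (by fun_prop)
        simp [Real.sin_pi_div_two]
      have := hca.tendsto.mono_left (nhdsWithin_le_nhds (s := Set.Iio (π/2)))
      simpa [Real.cos_pi_div_two] using this
    · filter_upwards [hmem] with b hb
      have hcb : 0 < Real.cos b := Real.cos_pos_of_mem_Ioo ⟨by linarith [hb.1, Real.pi_pos], hb.2⟩
      have hsb : 0 ≤ Real.sin b := Real.sin_nonneg_of_nonneg_of_le_pi hb.1.le (by linarith [hb.2, Real.pi_pos])
      have htan : 0 ≤ Real.tan b := by rw [Real.tan_eq_sin_div_cos]; exact div_nonneg hsb hcb.le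
      have hFnn : 0 ≤ F b := by
        apply intervalIntegral.integral_nonneg hb.2.le
        intro s hs
        have h1 : 0 ≤ s := le_trans hb.1.le hs.1
        have h2 : 0 ≤ Real.cos s := Real.cos_nonneg_of_mem_Icc ⟨by linarith [Real.pi_pos], hs.2⟩
        have h3 : 0 ≤ Real.sin s := Real.sin_nonneg_of_nonneg_of_le_pi h1 (by linarith [hs.2, Real.pi_pos])
        positivity
      positivity
    · filter_upwards [hmem] with b hb
      have hcb : 0 < Real.cos b := Real.cos_pos_of_mem_Ioo ⟨by linarith [hb.1, Real.pi_pos], hb.2⟩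
      have hsb : 0 ≤ Real.sin b := Real.sin_nonneg_of_nonneg_of_le_pi hb.1.le (by linarith [hb.2, Real.pi_pos])
      have htan : 0 ≤ Real.tan b := by rw [Real.tan_eq_sin_div_cos]; exact div_nonneg hsb hcb.le
      have Fub : F b ≤ (π/2) ^ k * (1 - Real.sin b) := by
        have hm : F b ≤ ∫ s in b..(π/2), (π/2) ^ k * Real.cos s := by
          apply intervalIntegral.integral_mono_on hb.2.le (gcont.intervalIntegrable _ _)
            ((continuous_const.mul Real.continuous_cos).intervalIntegrable _ _)
          intro s hs
          have h1 : 0 ≤ s := le_trans hb.1.le hs.1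
          have h2 : 0 ≤ Real.cos s := Real.cos_nonneg_of_mem_Icc ⟨by linarith [Real.pi_pos], hs.2⟩
          have h3 : Real.sin s ≤ 1 := Real.sin_le_one s
          have h4 : s ^ k ≤ (π/2) ^ k := pow_le_pow_left₀ h1 hs.2 k
          have h5 : 0 ≤ Real.sin s := Real.sin_nonneg_of_nonneg_of_le_pi h1 (by linarith [hs.2, Real.pi_pos])
          calc s ^ k * Real.cos s * Real.sin s ≤ s ^ k * Real.cos s * 1 := by
                apply mul_le_mul_of_nonneg_left h3; positivity
            _ = s ^ k * Real.cos s := by ring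
            _ ≤ (π/2) ^ k * Real.cos s := mul_le_mul_of_nonneg_right h4 h2
        rwa [intervalIntegral.integral_const_mul, integral_cos, Real.sin_pi_div_two] at hm
      calc Real.tan b * F b ≤ Real.tan b * ((π/2) ^ k * (1 - Real.sin b)) :=
            mul_le_mul_of_nonneg_left Fub htan
        _ = (π/2) ^ k * (Real.sin b * Real.cos b / (1 + Real.sin b)) := by
            have hs1 : (0:ℝ) < 1 + Real.sin b := by linarith
            rw [Real.tan_eq_sin_div_cos]
            field_simp
            linear_combination (-Real.sin b) * (Real.sin_sq_add_cos_sq b)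
  have t2 : Tendsto (fun b => Real.tan b * F b + ∫ θ in (0:ℝ)..b, p θ)
      (nhdsWithin (π/2) (Set.Iio (π/2))) (nhds (0 + ∫ θ in (0:ℝ)..(π/2), p θ)) := tF.add tp
  have t1' : Tendsto (fun b => ∫ θ in (0:ℝ)..b, A θ) (nhdsWithin (π/2) (Set.Iio (π/2)))
      (nhds (0 + ∫ θ in (0:ℝ)..(π/2), p θ)) := by
    apply t2.congr'
    filter_upwards [hmem] with b hb
    exact (key b hb).symm
  have := tendsto_nhds_unique t1 t1'
  rw [this]; ring

lemma momentI_eq (k : ℕ) :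
    momentI 2 k = (4 / π) * ∫ s in (0:ℝ)..(π/2), s ^ k * Real.sin s ^ 2 := by
  have Acont : Continuous (fun θ : ℝ => ∫ u in (0:ℝ)..1, Real.arccos (Real.cos θ * u) ^ k * u) := by
    apply intervalIntegral.continuous_parametric_intervalIntegral_of_continuous'
      (f := fun θ u => Real.arccos (Real.cos θ * u) ^ k * u)
    exact ((Real.continuous_arccos.comp
      ((Real.continuous_cos.comp continuous_fst).mul continuous_snd)).pow k).mul continuous_snd
  have hcast : (π / ((2:ℕ):ℝ)) = π / 2 := by norm_num
  have e1 : ∀ θ₁ : ℝ,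
      (∫ η in (0:ℝ)..(π/2), Real.arccos (Real.cos θ₁ * Real.cos η) ^ k * Real.cos η * Real.sin η)
        = ∫ u in (0:ℝ)..1, Real.arccos (Real.cos θ₁ * u) ^ k * u := fun θ₁ => sub1 _ k
  have e2 : (∫ θ₁ in (-(π/2))..(π/2),
        ∫ η in (0:ℝ)..(π/2), Real.arccos (Real.cos θ₁ * Real.cos η) ^ k * Real.cos η * Real.sin η)
      = 2 * ∫ s in (0:ℝ)..(π/2), s ^ k * Real.sin s ^ 2 := by
    rw [intervalIntegral.integral_congr (g := fun θ₁ => ∫ u in (0:ℝ)..1, Real.arccos (Real.cos θ₁ * u) ^ k * u)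
      (fun θ₁ _ => e1 θ₁)]
    have hsplit := intervalIntegral.integral_add_adjacent_intervals
      (a := -(π/2)) (b := 0) (c := π/2)
      (Acont.intervalIntegrable (μ := volume) _ _) (Acont.intervalIntegrable (μ := volume) _ _)
    have hneg : (∫ θ in (-(π/2))..(0:ℝ), ∫ u in (0:ℝ)..1, Real.arccos (Real.cos θ * u) ^ k * u)
        = ∫ θ in (0:ℝ)..(π/2), ∫ u in (0:ℝ)..1, Real.arccos (Real.cos θ * u) ^ k * u := by
      have := intervalIntegral.integral_comp_neg (a := (0:ℝ)) (b := π/2)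
        (fun θ => ∫ u in (0:ℝ)..1, Real.arccos (Real.cos θ * u) ^ k * u)
      simp only [neg_zero] at this
      rw [← this]
      apply intervalIntegral.integral_congr
      intro θ _
      simp [Real.cos_neg]
    rw [← hsplit, hneg, D_eq]
    ring
  rw [momentI, hcast, intervalIntegral.integral_const, e2, smul_eq_mul]
  have hπ : π ≠ 0 := Real.pi_ne_zero
  push_cast
  field_simp
  ring

lemma Jub (k : ℕ) : (∫ s in (0:ℝ)..(π/2), s ^ k * Real.sin s ^ 2)
    ≤ (π/2) ^ (k+1) * (1/(k+1)) := by
  have h : (∫ s in (0:ℝ)..(π/2), s ^ k * Real.sin s ^ 2) ≤ ∫ s in (0:ℝ)..(π/2), s ^ k := by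
    apply intervalIntegral.integral_mono_on (by positivity)
      (Continuous.intervalIntegrable (by fun_prop) _ _) (Continuous.intervalIntegrable (by fun_prop) _ _)
    intro s hs
    have h1 : Real.sin s ^ 2 ≤ 1 := Real.sin_sq_le_one s
    have h2 : (0:ℝ) ≤ s ^ k := pow_nonneg hs.1 k
    nlinarith
  rw [integral_pow] at h
  push_cast at h ⊢
  calc (∫ s in (0:ℝ)..(π/2), s ^ k * Real.sin s ^ 2) ≤ ((π/2) ^ (k+1) - 0 ^ (k+1)) / (k+1) := h
    _ = (π/2) ^ (k+1) * (1/((k:ℝ)+1)) := by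
        rw [zero_pow (Nat.succ_ne_zero k)]; ring


lemma Jlb (k : ℕ) :
    (π/2) ^ (k+1) * (1/(k+1)) - (π/2) ^ (k+1) * (π/2)^2 * (1/(k+1) - 2/(k+2) + 1/(k+3))
      ≤ ∫ s in (0:ℝ)..(π/2), s ^ k * Real.sin s ^ 2 := by
  have pi2 : (0:ℝ) < π/2 := by positivity
  have h : (∫ s in (0:ℝ)..(π/2), ((1 - (π/2)^2) * s ^ k + π * s ^ (k+1) - s ^ (k+2)))
      ≤ ∫ s in (0:ℝ)..(π/2), s ^ k * Real.sin s ^ 2 := by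
    apply intervalIntegral.integral_mono_on pi2.le
      (Continuous.intervalIntegrable (by fun_prop) _ _) (Continuous.intervalIntegrable (by fun_prop) _ _)
    intro s hs
    have haux : ∀ y : ℝ, 0 ≤ Real.cos y → 1 - y^2 ≤ Real.cos y ^ 2 := by
      intro y h2
      have h1 : 1 - y^2/2 ≤ Real.cos y := Real.one_sub_sq_div_two_le_cos
      rcases le_or_gt (y^2) 1 with hcase|hcase
      · nlinarith [mul_self_le_mul_self (by linarith : (0:ℝ) ≤ 1 - y^2/2) h1]
      · nlinarith [sq_nonneg (Real.cos y)]
    have hy : Real.sin s = Real.cos (π/2 - s) := (Real.cos_pi_div_two_sub s).symm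
    have h2 : 0 ≤ Real.cos (π/2 - s) := Real.cos_nonneg_of_mem_Icc
      ⟨by linarith [hs.2], by linarith [hs.1]⟩
    have h3 : 1 - (π/2 - s)^2 ≤ Real.sin s ^ 2 := by
      rw [hy]; exact haux _ h2
    have h4 : (0:ℝ) ≤ s ^ k := pow_nonneg hs.1 k
    have key : (1 - (π/2)^2) * s ^ k + π * s ^ (k+1) - s ^ (k+2)
        = s ^ k * (1 - (π/2 - s)^2) := by
      simp only [pow_succ]; ring
    rw [key]
    exact mul_le_mul_of_nonneg_left h3 h4
  refine le_trans (le_of_eq ?_) h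
  rw [intervalIntegral.integral_sub (Continuous.intervalIntegrable (by fun_prop) _ _) (Continuous.intervalIntegrable (by fun_prop) _ _),
      intervalIntegral.integral_add (Continuous.intervalIntegrable (by fun_prop) _ _) (Continuous.intervalIntegrable (by fun_prop) _ _),
      intervalIntegral.integral_const_mul, intervalIntegral.integral_const_mul,
      integral_pow, integral_pow, integral_pow]
  have c1 : ((k:ℝ)+1) ≠ 0 := by positivity
  have c2 : ((k:ℝ)+2) ≠ 0 := by positivity
  have c3 : ((k:ℝ)+3) ≠ 0 := by positivity
  push_cast
  rw [zero_pow (by omega : k+1 ≠ 0), zero_pow (by omega : k+1+1 ≠ 0), zero_pow (by omega : k+2+1 ≠ 0)]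
  rw [show (π/2)^(k+1+1) = (π/2)^(k+1) * (π/2) by ring, show (π/2)^(k+2+1) = (π/2)^(k+1) * (π/2)^2 by ring]
  field_simp
  ring

theorem moment_asymptotics_RP3 :
    Filter.Tendsto
      (fun k : ℕ => momentI 2 k / ((2 / (k : ℝ)) * (Real.pi / 2) ^ k))
      Filter.atTop (nhds 1) := by
  have hπ : (0:ℝ) < π := Real.pi_pos
  have h1 := tendsto_natCast_div_add_atTop (1:ℝ)
  have h2 := tendsto_natCast_div_add_atTop (2:ℝ)
  have h3 := tendsto_natCast_div_add_atTop (3:ℝ)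
  have hu : Tendsto (fun k : ℕ => (k:ℝ)/((k:ℝ)+1)) atTop (nhds 1) := h1
  have hl : Tendsto (fun k : ℕ =>
      (k:ℝ)/((k:ℝ)+1) - (π/2)^2 * ((k:ℝ)/((k:ℝ)+1) - 2*((k:ℝ)/((k:ℝ)+2)) + (k:ℝ)/((k:ℝ)+3)))
      atTop (nhds 1) := by
    have hmid : Tendsto (fun k : ℕ =>
        (k:ℝ)/((k:ℝ)+1) - 2*((k:ℝ)/((k:ℝ)+2)) + (k:ℝ)/((k:ℝ)+3)) atTop (nhds (1 - 2*1 + 1)) :=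
      (h1.sub (h2.const_mul 2)).add h3
    have := h1.sub ((tendsto_const_nhds (x := (π/2)^2)).mul hmid)
    have heq : (1:ℝ) - (π/2)^2 * (1 - 2*1 + 1) = 1 := by norm_num
    rwa [heq] at this
  apply tendsto_of_tendsto_of_tendsto_of_le_of_le' hl hu
  · -- lower bound
    filter_upwards [eventually_ge_atTop 1] with k hk
    have hk0 : (0:ℝ) < (k:ℝ) := by exact_mod_cast Nat.lt_of_lt_of_le Nat.zero_lt_one hk
    have hc : (0:ℝ) < (2 / (k:ℝ)) * (π/2) ^ k := by positivity
    rw [le_div_iff₀ hc, momentI_eq]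
    have key : ((k:ℝ)/((k:ℝ)+1) - (π/2)^2 * ((k:ℝ)/((k:ℝ)+1) - 2*((k:ℝ)/((k:ℝ)+2)) + (k:ℝ)/((k:ℝ)+3)))
          * ((2 / (k:ℝ)) * (π/2) ^ k)
        = (4/π) * ((π/2) ^ (k+1) * (1/((k:ℕ)+1))
            - (π/2) ^ (k+1) * (π/2)^2 * (1/((k:ℕ)+1) - 2/((k:ℕ)+2) + 1/((k:ℕ)+3))) := by
      push_cast
      rw [pow_succ]
      have e1 : ((k:ℝ)+1) ≠ 0 := by positivity
      have e2 : ((k:ℝ)+2) ≠ 0 := by positivity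
      have e3 : ((k:ℝ)+3) ≠ 0 := by positivity
      field_simp
      ring
    rw [key]
    apply mul_le_mul_of_nonneg_left _ (by positivity : (0:ℝ) ≤ 4/π)
    exact_mod_cast Jlb k
  · -- upper bound
    filter_upwards [eventually_ge_atTop 1] with k hk
    have hk0 : (0:ℝ) < (k:ℝ) := by exact_mod_cast Nat.lt_of_lt_of_le Nat.zero_lt_one hk
    have hc : (0:ℝ) < (2 / (k:ℝ)) * (π/2) ^ k := by positivity
    rw [div_le_iff₀ hc, momentI_eq]
    have key : ((k:ℝ)/((k:ℝ)+1)) * ((2 / (k:ℝ)) * (π/2) ^ k)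
        = (4/π) * ((π/2) ^ (k+1) * (1/((k:ℕ)+1))) := by
      push_cast
      rw [pow_succ]
      have e1 : ((k:ℝ)+1) ≠ 0 := by positivity
      field_simp
      ring
    rw [key]
    apply mul_le_mul_of_nonneg_left _ (by positivity : (0:ℝ) ≤ 4/π)
    exact_mod_cast Jub k
end

section
/- For every fixed integer k ≥ 0, the limit of the k-th moment of distance as n → ∞ is lim_{n→∞} I(n,k) = (π/((k+2)(k+1))) · (π/2)^{k+1} · ₁F₂(1; (k+3)/2, (k+4)/2; −π²/4). -/
open MeasureTheory

/-- The ascending Pochhammer symbol `(b)_j = b (b+1) ⋯ (b+j-1)`. -/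
noncomputable def asc (b : ℝ) (j : ℕ) : ℝ := ∏ i ∈ Finset.range j, (b + i)

/-- The generalized hypergeometric function `₁F₂(1; b₁, b₂; z)`. -/
noncomputable def oneFtwo (b₁ b₂ z : ℝ) : ℝ := ∑' j : ℕ, z ^ j / (asc b₁ j * asc b₂ j)


open Real Filter Nat

noncomputable def S (m : ℕ) : ℝ :=
  ∑' j : ℕ, (-1) ^ j * Real.pi ^ (m + 2 * j) / (Nat.factorial (m + 2 * j) : ℝ)

lemma summable_S (m : ℕ) :
    Summable (fun j : ℕ => (-1) ^ j * Real.pi ^ (m + 2 * j) / (Nat.factorial (m + 2 * j) : ℝ)) := by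
  apply Summable.of_abs
  have h := (Real.summable_pow_div_factorial Real.pi).comp_injective
    (i := fun j : ℕ => m + 2 * j) (fun a b hab => by simp only [] at hab; omega)
  refine h.congr fun j => ?_
  simp only [Function.comp]
  rw [abs_div, abs_mul, abs_pow, abs_pow, abs_neg, abs_one, one_pow, one_mul,
    abs_of_nonneg Real.pi_pos.le, Nat.abs_cast]

lemma S_shift (m : ℕ) : S m = Real.pi ^ m / (Nat.factorial m : ℝ) - S (m + 2) := by
  have h := Summable.tsum_eq_zero_add (summable_S m)
  rw [S, h]
  have : ∀ j : ℕ, (-1 : ℝ) ^ (j + 1) * Real.pi ^ (m + 2 * (j + 1)) /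
        (Nat.factorial (m + 2 * (j + 1)) : ℝ)
      = -((-1) ^ j * Real.pi ^ ((m + 2) + 2 * j) / (Nat.factorial ((m + 2) + 2 * j) : ℝ)) := by
    intro j
    have e : m + 2 * (j + 1) = (m + 2) + 2 * j := by omega
    rw [e, pow_succ]
    ring
  rw [tsum_congr this, tsum_neg]
  simp only [S, pow_zero, one_mul, Nat.mul_zero, Nat.add_zero]
  ring

lemma S_two : S 2 = 2 := by
  have hc := Real.cos_eq_tsum Real.pi
  have hsum : Summable (fun n : ℕ => (-1 : ℝ) ^ n * Real.pi ^ (2 * n) / (Nat.factorial (2 * n) : ℝ)) := by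
    have := summable_S 0
    simpa using this
  rw [Summable.tsum_eq_zero_add hsum] at hc
  have : ∀ n : ℕ, (-1 : ℝ) ^ (n + 1) * Real.pi ^ (2 * (n + 1)) / (Nat.factorial (2 * (n + 1)) : ℝ)
      = -((-1) ^ n * Real.pi ^ (2 + 2 * n) / (Nat.factorial (2 + 2 * n) : ℝ)) := by
    intro n
    have e : 2 * (n + 1) = 2 + 2 * n := by omega
    rw [e, pow_succ]; ring
  rw [tsum_congr this, tsum_neg] at hc
  have hS : S 2 = ∑' n : ℕ, (-1 : ℝ) ^ n * Real.pi ^ (2 + 2 * n) / (Nat.factorial (2 + 2 * n) : ℝ) := rfl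
  rw [Real.cos_pi] at hc
  simp only [pow_zero, one_mul, Nat.mul_zero, Nat.factorial_zero] at hc
  rw [hS]
  have := hc
  norm_num at this
  linarith [this]

lemma S_three : S 3 = Real.pi := by
  have hc := Real.sin_eq_tsum Real.pi
  have hsum : Summable (fun n : ℕ => (-1 : ℝ) ^ n * Real.pi ^ (2 * n + 1) / (Nat.factorial (2 * n + 1) : ℝ)) := by
    have := summable_S 1
    refine this.congr fun n => ?_
    have e : 1 + 2 * n = 2 * n + 1 := by omega
    rw [e]
  rw [Summable.tsum_eq_zero_add hsum] at hc
  have : ∀ n : ℕ, (-1 : ℝ) ^ (n + 1) * Real.pi ^ (2 * (n + 1) + 1) / (Nat.factorial (2 * (n + 1) + 1) : ℝ)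
      = -((-1) ^ n * Real.pi ^ (3 + 2 * n) / (Nat.factorial (3 + 2 * n) : ℝ)) := by
    intro n
    have e : 2 * (n + 1) + 1 = 3 + 2 * n := by omega
    rw [e, pow_succ]; ring
  rw [tsum_congr this, tsum_neg] at hc
  have hS : S 3 = ∑' n : ℕ, (-1 : ℝ) ^ n * Real.pi ^ (3 + 2 * n) / (Nat.factorial (3 + 2 * n) : ℝ) := rfl
  rw [Real.sin_pi] at hc
  norm_num at hc
  rw [hS]
  linarith [hc]


noncomputable def cc (k : ℕ) : ℝ := (Nat.factorial k : ℝ) / 2 ^ (k + 1) * S (k + 2)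

lemma cc_zero : cc 0 = 1 := by simp [cc, S_two]

lemma cc_one : cc 1 = Real.pi / 4 := by
  simp [cc, S_three]
  norm_num
  ring

lemma cc_rec (k : ℕ) : cc (k + 2) =
    (Real.pi / 2) ^ (k + 2) / 2 - ((k : ℝ) + 2) * ((k : ℝ) + 1) / 4 * cc k := by
  have h := S_shift (k + 2)
  have hS : S (k + 4) = Real.pi ^ (k + 2) / (Nat.factorial (k + 2) : ℝ) - S (k + 2) := by
    have e : k + 2 + 2 = k + 4 := by omega
    rw [e] at h
    linarith
  have e2 : k + 2 + 2 = k + 4 := by omega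
  rw [cc, e2, hS, cc]
  have hf2 : (Nat.factorial (k + 2) : ℝ) = ((k : ℝ) + 2) * ((k : ℝ) + 1) * (Nat.factorial k : ℝ) := by
    rw [Nat.factorial_succ, Nat.factorial_succ]; push_cast; ring
  have hfpos : (Nat.factorial (k + 2) : ℝ) ≠ 0 := by positivity
  rw [hf2] at hfpos ⊢
  rw [div_pow]
  field_simp
  ring

lemma asc_pos {b : ℝ} (hb : 0 < b) (j : ℕ) : 0 < asc b j := by
  apply Finset.prod_pos
  intro i _
  positivity

lemma asc_prod (k j : ℕ) :
    asc (((k : ℝ) + 3) / 2) j * asc (((k : ℝ) + 4) / 2) j * 4 ^ j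
      * (Nat.factorial (k + 2) : ℝ) = (Nat.factorial (k + 2 + 2 * j) : ℝ) := by
  induction j with
  | zero => simp [asc]
  | succ j ih =>
    have e : k + 2 + 2 * (j + 1) = k + 2 + 2 * j + 1 + 1 := by omega
    have hr : (Nat.factorial (k + 2 + 2 * j + 1 + 1) : ℝ)
        = ((k:ℝ) + 2 * j + 4) * ((k:ℝ) + 2 * j + 3) * (Nat.factorial (k + 2 + 2 * j) : ℝ) := by
      rw [Nat.factorial_succ (k + 2 + 2 * j + 1), Nat.factorial_succ (k + 2 + 2 * j)]
      push_cast
      ring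
    rw [e, hr, asc, asc, Finset.prod_range_succ, Finset.prod_range_succ, pow_succ]
    rw [asc, asc] at ih
    rw [← ih]
    push_cast
    ring

lemma oneFtwo_eq_cc (k : ℕ) :
    (Real.pi / (((k : ℝ) + 2) * ((k : ℝ) + 1))) * (Real.pi / 2) ^ (k + 1) *
      oneFtwo (((k : ℝ) + 3) / 2) (((k : ℝ) + 4) / 2) (-(Real.pi ^ 2 / 4)) = cc k := by
  rw [oneFtwo, ← tsum_mul_left, cc, S, ← tsum_mul_left]
  apply tsum_congr
  intro j
  have h1 : (0 : ℝ) < asc (((k : ℝ) + 3) / 2) j := asc_pos (by positivity) j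
  have h2 : (0 : ℝ) < asc (((k : ℝ) + 4) / 2) j := asc_pos (by positivity) j
  have hz : (-(Real.pi ^ 2 / 4)) ^ j = (-1) ^ j * Real.pi ^ (2 * j) / 4 ^ j := by
    rw [neg_pow, div_pow, ← pow_mul]
    ring_nf
  have key : (Nat.factorial (k + 2 + 2 * j) : ℝ)
      = asc (((k : ℝ) + 3) / 2) j * asc (((k : ℝ) + 4) / 2) j * 4 ^ j
        * (((k : ℝ) + 2) * ((k : ℝ) + 1) * (Nat.factorial k : ℝ)) := by
    rw [← asc_prod k j, Nat.factorial_succ, Nat.factorial_succ]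
    push_cast
    ring
  have hk1 : ((k : ℝ) + 1) ≠ 0 := by positivity
  have hk2 : ((k : ℝ) + 2) ≠ 0 := by positivity
  have hfk : (Nat.factorial k : ℝ) ≠ 0 := by positivity
  have h4 : ((4:ℝ) ^ j) ≠ 0 := by positivity
  rw [hz, key]
  have hpow : Real.pi ^ (k + 2 + 2 * j) = Real.pi ^ (k + 1) * Real.pi ^ (2 * j) * Real.pi := by
    rw [← pow_add, ← pow_succ]
    congr 1
    omega
  rw [hpow, div_pow]
  field_simp

noncomputable def J (k : ℕ) : ℝ := ∫ x in (0:ℝ)..(Real.pi/2), x ^ k * Real.sin (2*x)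

lemma hv_sin (x : ℝ) : HasDerivAt (fun y : ℝ => -(Real.cos (2*y)) / 2) (Real.sin (2*x)) x := by
  have h : HasDerivAt (fun y : ℝ => 2*y) 2 x := by
    simpa using (hasDerivAt_id x).const_mul 2
  have h2 : HasDerivAt (fun y : ℝ => -(Real.cos (2*y)) / 2) (-(-Real.sin (2 * x) * 2) / 2) x := (h.cos.neg).div_const 2
  convert h2 using 1
  ring

lemma hv_cos (x : ℝ) : HasDerivAt (fun y : ℝ => Real.sin (2*y) / 2) (Real.cos (2*x)) x := by
  have h : HasDerivAt (fun y : ℝ => 2*y) 2 x := by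
    simpa using (hasDerivAt_id x).const_mul 2
  have h2 : HasDerivAt (fun y : ℝ => Real.sin (2*y) / 2) (Real.cos (2 * x) * 2 / 2) x := h.sin.div_const 2
  convert h2 using 1
  ring

lemma hu_pow (k : ℕ) (x : ℝ) :
    HasDerivAt (fun y : ℝ => y ^ (k+1)) (((k:ℝ)+1) * x ^ k) x := by
  have := hasDerivAt_pow (k+1) x
  simpa using this

lemma L1 (k : ℕ) : (∫ x in (0:ℝ)..(Real.pi/2), x ^ (k+1) * Real.sin (2*x))
    = (Real.pi/2) ^ (k+1) / 2
      + ((k:ℝ)+1)/2 * ∫ x in (0:ℝ)..(Real.pi/2), x ^ k * Real.cos (2*x) := by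
  rw [intervalIntegral.integral_mul_deriv_eq_deriv_mul
    (u := fun y => y ^ (k+1)) (u' := fun y => ((k:ℝ)+1) * y ^ k)
    (v := fun y => -(Real.cos (2*y)) / 2) (v' := fun y => Real.sin (2*y))
    (fun x _ => hu_pow k x) (fun x _ => hv_sin x)
    (by apply Continuous.intervalIntegrable; continuity)
    (by apply Continuous.intervalIntegrable; continuity)]
  have : (∫ x in (0:ℝ)..(Real.pi/2), ((k:ℝ)+1) * x ^ k * (-(Real.cos (2*x)) / 2))
      = -(((k:ℝ)+1)/2) * ∫ x in (0:ℝ)..(Real.pi/2), x ^ k * Real.cos (2*x) := by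
    rw [← intervalIntegral.integral_const_mul]
    apply intervalIntegral.integral_congr
    intro x _
    ring
  rw [this]
  have e1 : 2 * (Real.pi / 2) = Real.pi := by ring
  rw [e1, Real.cos_pi]
  norm_num
  ring


lemma L2 (k : ℕ) : (∫ x in (0:ℝ)..(Real.pi/2), x ^ (k+1) * Real.cos (2*x))
    = -(((k:ℝ)+1)/2) * ∫ x in (0:ℝ)..(Real.pi/2), x ^ k * Real.sin (2*x) := by
  rw [intervalIntegral.integral_mul_deriv_eq_deriv_mul
    (u := fun y => y ^ (k+1)) (u' := fun y => ((k:ℝ)+1) * y ^ k)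
    (v := fun y => Real.sin (2*y) / 2) (v' := fun y => Real.cos (2*y))
    (fun x _ => hu_pow k x) (fun x _ => hv_cos x)
    (by apply Continuous.intervalIntegrable; continuity)
    (by apply Continuous.intervalIntegrable; continuity)]
  have : (∫ x in (0:ℝ)..(Real.pi/2), ((k:ℝ)+1) * x ^ k * (Real.sin (2*x) / 2))
      = (((k:ℝ)+1)/2) * ∫ x in (0:ℝ)..(Real.pi/2), x ^ k * Real.sin (2*x) := by
    rw [← intervalIntegral.integral_const_mul]
    apply intervalIntegral.integral_congr
    intro x _
    ring
  rw [this]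
  have e1 : 2 * (Real.pi / 2) = Real.pi := by ring
  rw [e1, Real.sin_pi]
  norm_num

lemma J_rec (k : ℕ) : J (k+2)
    = (Real.pi/2) ^ (k+2) / 2 - ((k:ℝ)+2) * ((k:ℝ)+1) / 4 * J k := by
  have h1 := L1 (k+1)
  have h2 := L2 k
  rw [J, h1, h2, J]
  push_cast
  ring

lemma J_zero : J 0 = 1 := by
  rw [J]
  have : (∫ x in (0:ℝ)..(Real.pi/2), x ^ 0 * Real.sin (2*x))
      = ∫ x in (0:ℝ)..(Real.pi/2), Real.sin (2*x) := by
    apply intervalIntegral.integral_congr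
    intro x _
    simp
  rw [this]
  rw [intervalIntegral.integral_comp_mul_left Real.sin (two_ne_zero)]
  norm_num
  rw [show 2 * (Real.pi / 2) = Real.pi from by ring, Real.cos_pi]
  norm_num

lemma J_one : J 1 = Real.pi / 4 := by
  have h := L1 0
  have h0 : (∫ x in (0:ℝ)..(Real.pi/2), x ^ 0 * Real.cos (2*x)) = 0 := by
    have : (∫ x in (0:ℝ)..(Real.pi/2), x ^ 0 * Real.cos (2*x))
        = ∫ x in (0:ℝ)..(Real.pi/2), Real.cos (2*x) := by
      apply intervalIntegral.integral_congr
      intro x _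
      simp
    rw [this, intervalIntegral.integral_comp_mul_left Real.cos (two_ne_zero)]
    norm_num
    rw [show 2 * (Real.pi / 2) = Real.pi from by ring]
    exact Real.sin_pi
  rw [J, h, h0]
  norm_num
  ring

lemma J_eq_cc : ∀ k, J k = cc k := by
  have key : ∀ k, J k = cc k ∧ J (k+1) = cc (k+1) := by
    intro k
    induction k with
    | zero => exact ⟨by rw [J_zero, cc_zero], by rw [J_one, cc_one]⟩
    | succ k ih =>
      refine ⟨ih.2, ?_⟩
      rw [J_rec k, cc_rec k, ih.1]
  exact fun k => (key k).1

noncomputable def Fk (k : ℕ) (θ : ℝ) : ℝ :=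
  ∫ η in (0:ℝ)..(Real.pi/2),
    (Real.arccos (Real.cos θ * Real.cos η)) ^ k * Real.cos η * Real.sin η

lemma Fk_continuous (k : ℕ) : Continuous (Fk k) := by
  apply intervalIntegral.continuous_parametric_intervalIntegral_of_continuous'
    (f := fun θ η => (Real.arccos (Real.cos θ * Real.cos η)) ^ k * Real.cos η * Real.sin η)
  apply Continuous.mul
  apply Continuous.mul
  · exact (Real.continuous_arccos.comp
      ((Real.continuous_cos.comp continuous_fst).mul
        (Real.continuous_cos.comp continuous_snd))).pow k
  · exact Real.continuous_cos.comp continuous_snd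
  · exact Real.continuous_sin.comp continuous_snd

lemma J_eq_two_Fk (k : ℕ) : J k = 2 * Fk k 0 := by
  rw [J, Fk, ← intervalIntegral.integral_const_mul]
  apply intervalIntegral.integral_congr
  intro x hx
  rw [Set.uIcc_of_le (by positivity)] at hx
  have h1 : Real.arccos (Real.cos 0 * Real.cos x) = x := by
    rw [Real.cos_zero, one_mul]
    exact Real.arccos_cos hx.1 (le_trans hx.2 (by linarith [Real.pi_pos]))
  simp only []
  rw [h1, Real.sin_two_mul]
  ring

theorem moment_large_n_limit (k : ℕ) :
    Filter.Tendsto (fun n : ℕ => momentI n k) Filter.atTop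
      (nhds ((Real.pi / (((k : ℝ) + 2) * ((k : ℝ) + 1))) * (Real.pi / 2) ^ (k + 1) *
        oneFtwo (((k : ℝ) + 3) / 2) (((k : ℝ) + 4) / 2) (-(Real.pi ^ 2 / 4)))) := by
  set Φ : ℝ → ℝ := fun x => ∫ t in (0:ℝ)..x, Fk k t with hΦdef
  have hFc := Fk_continuous k
  have hΦ : HasDerivAt Φ (Fk k 0) 0 := by
    exact (intervalIntegral.integral_hasStrictDerivAt_right
      (hFc.intervalIntegrable 0 0)
      (hFc.stronglyMeasurable.stronglyMeasurableAtFilter)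
      hFc.continuousAt).hasDerivAt
  have hslope := hasDerivAt_iff_tendsto_slope.mp hΦ
  have tend1 : Filter.Tendsto (fun n : ℕ => Real.pi / n) Filter.atTop (nhdsWithin 0 {(0:ℝ)}ᶜ) := by
    rw [tendsto_nhdsWithin_iff]
    constructor
    · exact tendsto_const_div_atTop_nhds_zero_nat Real.pi
    · filter_upwards [Filter.eventually_ge_atTop 1] with n hn
      have : (0:ℝ) < Real.pi / n := by
        apply div_pos Real.pi_pos
        exact_mod_cast Nat.pos_of_ne_zero (by omega)
      exact ne_of_gt this
  have tend2 : Filter.Tendsto (fun n : ℕ => -(Real.pi / n)) Filter.atTop (nhdsWithin 0 {(0:ℝ)}ᶜ) := by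
    rw [tendsto_nhdsWithin_iff]
    constructor
    · simpa using (tendsto_const_div_atTop_nhds_zero_nat Real.pi).neg
    · filter_upwards [Filter.eventually_ge_atTop 1] with n hn
      have : (0:ℝ) < Real.pi / n := by
        apply div_pos Real.pi_pos
        exact_mod_cast Nat.pos_of_ne_zero (by omega)
      simp only [Set.mem_compl_iff, Set.mem_singleton_iff, neg_eq_zero]
      exact ne_of_gt this
  have hA := hslope.comp tend1
  have hB := hslope.comp tend2
  have htend := hA.add hB
  have hlim : (Real.pi / (((k : ℝ) + 2) * ((k : ℝ) + 1))) * (Real.pi / 2) ^ (k + 1) *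
      oneFtwo (((k : ℝ) + 3) / 2) (((k : ℝ) + 4) / 2) (-(Real.pi ^ 2 / 4))
      = Fk k 0 + Fk k 0 := by
    rw [oneFtwo_eq_cc, ← J_eq_cc, J_eq_two_Fk]
    ring
  rw [hlim]
  apply htend.congr'
  filter_upwards [Filter.eventually_ge_atTop 1] with n hn
  have hn0 : (0:ℝ) < (n:ℝ) := by exact_mod_cast Nat.pos_of_ne_zero (by omega)
  set t : ℝ := Real.pi / n with ht
  have ht0 : 0 < t := div_pos Real.pi_pos hn0
  -- compute momentI
  have hconst : (∫ θ₂ in (-(Real.pi / n))..(Real.pi / n),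
      ∫ θ₁ in (-(Real.pi / n))..(Real.pi / n),
        ∫ η in (0 : ℝ)..(Real.pi / 2),
          (Real.arccos (Real.cos θ₁ * Real.cos η)) ^ k * Real.cos η * Real.sin η)
      = (t - (-t)) * ∫ θ₁ in (-t)..t, Fk k θ₁ := by
    rw [intervalIntegral.integral_const]
    simp [ht, Fk]
  have hsplit : (∫ θ₁ in (-t)..t, Fk k θ₁) = Φ t - Φ (-t) := by
    have h1 : (∫ θ₁ in (-t)..(0:ℝ), Fk k θ₁) + (∫ θ₁ in (0:ℝ)..t, Fk k θ₁)
        = ∫ θ₁ in (-t)..t, Fk k θ₁ :=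
      intervalIntegral.integral_add_adjacent_intervals
        (hFc.intervalIntegrable _ _) (hFc.intervalIntegrable _ _)
    have h2 : (∫ θ₁ in (-t)..(0:ℝ), Fk k θ₁) = -Φ (-t) :=
      intervalIntegral.integral_symm 0 (-t)
    rw [← h1, h2, hΦdef]
    ring
  have hΦ0 : Φ 0 = 0 := intervalIntegral.integral_same
  have hmom : momentI n k = ((n:ℝ)^2 / (2 * Real.pi ^ 2)) * ((t - (-t)) * (Φ t - Φ (-t))) := by
    rw [momentI, hconst, hsplit]
  have key : ∀ X : ℝ, ((n:ℝ)^2 / (2 * Real.pi ^ 2)) * ((t - -t) * X) = X / t := by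
    intro X
    rw [ht]
    have hπ : Real.pi ≠ 0 := Real.pi_ne_zero
    have hne : (n:ℝ) ≠ 0 := ne_of_gt hn0
    field_simp
    ring
  have hgoal2 : slope Φ 0 t + slope Φ 0 (-t) = (Φ t - Φ (-t)) / t := by
    simp only [slope_def_field, hΦ0, sub_zero]
    rw [div_neg]
    ring
  show slope Φ 0 (Real.pi / n) + slope Φ 0 (-(Real.pi / n)) = momentI n k
  rw [← ht, hgoal2, hmom, key]
end

section
/- For every integer n ≥ 3 and every integer k ≥ 0, the k-th moment of distance equals the k-th moment of the probability density f_n: I(n,k) = ∫_0^{π/2} x^k · f_n(x) dx, where f_n(x) = (2n/π) · sin²(x) for 0 ≤ x ≤ π/n and f_n(x) = (2n/π) · sin(x) · cos(x) · tan(π/n) for π/n < x ≤ π/2. -/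
open MeasureTheory

/-- The probability density function of distance between two uniform random points
on the homogeneous lens space `L(n;1)`. -/
noncomputable def pdfF (n : ℕ) (x : ℝ) : ℝ :=
  if x ≤ Real.pi / n then (2 * n / Real.pi) * Real.sin x ^ 2
  else (2 * n / Real.pi) * Real.sin x * Real.cos x * Real.tan (Real.pi / n)

open Real intervalIntegral in
private lemma aux_cont (k : ℕ) : Continuous (fun x : ℝ => x ^ k * Real.sin x * Real.cos x) := by
  fun_prop

open Real intervalIntegral in
private lemma F_hasDerivAt (k : ℕ) (θ : ℝ) :
    HasDerivAt (fun t => ∫ x in t..(Real.pi/2), x ^ k * Real.sin x * Real.cos x)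
      (-(θ ^ k * Real.sin θ * Real.cos θ)) θ := by
  have hc := aux_cont k
  have h := intervalIntegral.integral_hasDerivAt_right
    (hc.intervalIntegrable (Real.pi/2) θ)
    hc.stronglyMeasurable.stronglyMeasurableAtFilter
    hc.continuousAt
  have h2 := h.neg
  refine h2.congr_of_eventuallyEq (Filter.Eventually.of_forall fun t => ?_)
  simp only [Pi.neg_apply]
  rw [intervalIntegral.integral_symm]

open Real intervalIntegral in
private lemma inner_subst (k : ℕ) {θ : ℝ} (h0 : 0 < θ) (h2 : θ < Real.pi/2) :
    (∫ η in (0:ℝ)..(Real.pi/2),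
        Real.arccos (Real.cos θ * Real.cos η) ^ k * Real.cos η * Real.sin η)
      = (1 / Real.cos θ ^ 2) * ∫ x in θ..(Real.pi/2), x ^ k * Real.sin x * Real.cos x := by
  have hπ := Real.pi_pos
  set c : ℝ := Real.cos θ with hc
  have hc0 : 0 < c := Real.cos_pos_of_mem_Ioo ⟨by linarith, h2⟩
  have hsin : 0 < Real.sin θ := Real.sin_pos_of_pos_of_lt_pi h0 (by linarith)
  have hc1 : c < 1 := by nlinarith [Real.sin_sq_add_cos_sq θ]
  have hcsq : c ^ 2 < 1 := by nlinarith
  have hs : ∀ η : ℝ, 0 < 1 - (c * Real.cos η) ^ 2 := by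
    intro η
    nlinarith [Real.neg_one_le_cos η, Real.cos_le_one η, sq_nonneg c, sq_nonneg (Real.cos η),
      Real.sin_sq_add_cos_sq η]
  set f : ℝ → ℝ := fun η => Real.arccos (c * Real.cos η) with hf
  set f' : ℝ → ℝ := fun η => c * Real.sin η / Real.sqrt (1 - (c * Real.cos η) ^ 2) with hf'
  set g : ℝ → ℝ := fun x => x ^ k * Real.sin x * Real.cos x / c ^ 2 with hg
  have hlt : ∀ η : ℝ, c * Real.cos η < 1 := by
    intro η; nlinarith [Real.neg_one_le_cos η, Real.cos_le_one η]
  have hgt : ∀ η : ℝ, -1 < c * Real.cos η := by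
    intro η; nlinarith [Real.neg_one_le_cos η, Real.cos_le_one η]
  have hder : ∀ η ∈ Set.uIcc (0:ℝ) (Real.pi/2), HasDerivAt f (f' η) η := by
    intro η _
    have h1 := Real.hasDerivAt_arccos (hgt η).ne' (hlt η).ne
    have hin : HasDerivAt (fun η : ℝ => c * Real.cos η) (c * (-Real.sin η)) η :=
      (Real.hasDerivAt_cos η).const_mul c
    have := h1.comp η hin
    refine this.congr_deriv ?_
    have hsq : Real.sqrt (1 - (c * Real.cos η) ^ 2) ≠ 0 :=
      (Real.sqrt_pos.mpr (hs η)).ne'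
    simp only [hf']
    field_simp
  have hsq : ∀ η : ℝ, Real.sqrt (1 - (c * Real.cos η) ^ 2) ≠ 0 :=
    fun η => (Real.sqrt_pos.mpr (hs η)).ne'
  have hf'cont : Continuous f' := by
    apply Continuous.div (by fun_prop) (by fun_prop) hsq
  have hgcont : Continuous g := by fun_prop
  have key := intervalIntegral.integral_comp_smul_deriv hder hf'cont.continuousOn hgcont
  have hfa : f 0 = θ := by
    simp only [hf, Real.cos_zero, mul_one, hc]
    exact Real.arccos_cos h0.le (by linarith)
  have hfb : f (Real.pi/2) = Real.pi/2 := by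
    simp [hf, Real.cos_pi_div_two]
  rw [hfa, hfb] at key
  have heq : (fun η => f' η • (g ∘ f) η)
      = fun η => Real.arccos (c * Real.cos η) ^ k * Real.cos η * Real.sin η := by
    funext η
    simp only [hf, hf', hg, Function.comp, smul_eq_mul]
    rw [Real.sin_arccos, Real.cos_arccos (hgt η).le (hlt η).le]
    have hsne : Real.sqrt (1 - c ^ 2 * Real.cos η ^ 2) ≠ 0 := by
      have := hsq η; rwa [mul_pow] at this
    field_simp [hsq η, hsne]
  rw [heq] at key
  rw [key]
  simp only [hg]
  rw [intervalIntegral.integral_div]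
  ring

open Real intervalIntegral in
private lemma inner_subst_abs (k : ℕ) {θ : ℝ} (h0 : θ ≠ 0) (h1 : -(Real.pi/2) < θ)
    (h2 : θ < Real.pi/2) :
    (∫ η in (0:ℝ)..(Real.pi/2),
        Real.arccos (Real.cos θ * Real.cos η) ^ k * Real.cos η * Real.sin η)
      = (1 / Real.cos θ ^ 2) * ∫ x in |θ|..(Real.pi/2), x ^ k * Real.sin x * Real.cos x := by
  have habs0 : 0 < |θ| := abs_pos.mpr h0
  have habs2 : |θ| < Real.pi/2 := abs_lt.mpr ⟨h1, h2⟩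
  have h := inner_subst k habs0 habs2
  simpa only [Real.cos_abs] using h

theorem moment_eq_pdf_moment (n k : ℕ) (hn : 3 ≤ n) :
    momentI n k = ∫ x in (0 : ℝ)..(Real.pi / 2), x ^ k * pdfF n x := by
  have hπ := Real.pi_pos
  have hn3 : (3:ℝ) ≤ (n:ℝ) := by exact_mod_cast hn
  have hn0 : (0:ℝ) < (n:ℝ) := by linarith
  set a : ℝ := Real.pi / n with ha
  have ha0 : 0 < a := by positivity
  have ha3 : a ≤ Real.pi / 3 := by
    rw [ha, div_le_div_iff₀ hn0 (by norm_num)]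
    nlinarith
  have ha2 : a < Real.pi / 2 := by nlinarith
  have hcosa : 0 < Real.cos a := Real.cos_pos_of_mem_Ioo ⟨by linarith, ha2⟩
  set F : ℝ → ℝ := fun t => ∫ x in t..(Real.pi/2), x ^ k * Real.sin x * Real.cos x with hF
  set S : ℝ := ∫ x in (0:ℝ)..a, x ^ k * Real.sin x ^ 2 with hS
  have hFcont : Continuous F :=
    continuous_iff_continuousAt.mpr fun t => (F_hasDerivAt k t).continuousAt
  set H : ℝ → ℝ := fun θ => (1 / Real.cos θ ^ 2) * F |θ| with hH
  -- continuity of H on [-a, a]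
  have hHcont : ContinuousOn H (Set.Icc (-a) a) := by
    apply ContinuousOn.mul
    · apply ContinuousOn.div continuousOn_const (by fun_prop)
      intro x hx
      have : 0 < Real.cos x :=
        Real.cos_pos_of_mem_Ioo ⟨by simp at hx; linarith [hx.1], by simp at hx; linarith [hx.2]⟩
      positivity
    · exact (hFcont.comp continuous_abs).continuousOn
  -- step 1: θ₂ integral is constant
  rw [momentI, intervalIntegral.integral_const]
  -- step 2: replace inner θ₁-integrand by H a.e.
  have hstep2 :
      (∫ θ₁ in (-a)..a, ∫ η in (0:ℝ)..(Real.pi/2),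
          Real.arccos (Real.cos θ₁ * Real.cos η) ^ k * Real.cos η * Real.sin η)
        = ∫ θ₁ in (-a)..a, H θ₁ := by
    apply intervalIntegral.integral_congr_ae
    have h0 : ∀ᵐ (θ : ℝ), θ ≠ 0 := by
      rw [MeasureTheory.ae_iff]
      have : {θ : ℝ | ¬θ ≠ 0} = {0} := by ext x; simp
      rw [this]
      exact Real.volume_singleton
    filter_upwards [h0] with θ hθ0 hθmem
    have hmem : θ ∈ Set.Ioc (-a) a := by
      rwa [Set.uIoc_of_le (by linarith : -a ≤ a)] at hθmem
    exact inner_subst_abs k hθ0 (by linarith [hmem.1]) (by linarith [hmem.2])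
  rw [hstep2]
  -- step 3: split and use evenness
  have hsub1 : Set.uIcc (-a) (0:ℝ) ⊆ Set.Icc (-a) a := by
    rw [Set.uIcc_of_le (by linarith : -a ≤ (0:ℝ))]
    exact Set.Icc_subset_Icc le_rfl ha0.le
  have hsub2 : Set.uIcc (0:ℝ) a ⊆ Set.Icc (-a) a := by
    rw [Set.uIcc_of_le ha0.le]
    exact Set.Icc_subset_Icc (by linarith) le_rfl
  have hint1 : IntervalIntegrable H volume (-a) 0 := (hHcont.mono hsub1).intervalIntegrable
  have hint2 : IntervalIntegrable H volume 0 a := (hHcont.mono hsub2).intervalIntegrable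
  have hsplit : (∫ θ in (-a)..a, H θ) = (∫ θ in (-a)..(0:ℝ), H θ) + ∫ θ in (0:ℝ)..a, H θ :=
    (intervalIntegral.integral_add_adjacent_intervals hint1 hint2).symm
  have heven : (∫ θ in (-a)..(0:ℝ), H θ) = ∫ θ in (0:ℝ)..a, H θ := by
    have h1 : (∫ θ in (0:ℝ)..a, H (-θ)) = ∫ θ in (-a)..(-(0:ℝ)), H θ :=
      intervalIntegral.integral_comp_neg (a := 0) (b := a) (f := H)
    have h2 : (fun θ => H (-θ)) = H := by
      funext θ; simp [hH, Real.cos_neg, abs_neg]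
    rw [h2] at h1
    simp only [neg_zero] at h1
    exact h1.symm
  -- step 4: on [0,a], H θ = (1/cos² θ) * F θ, then integrate by parts
  have hstep4 : (∫ θ in (0:ℝ)..a, H θ) = ∫ θ in (0:ℝ)..a, F θ * (1 / Real.cos θ ^ 2) := by
    apply intervalIntegral.integral_congr
    intro θ hθ
    rw [Set.uIcc_of_le ha0.le] at hθ
    simp only [hH]
    rw [abs_of_nonneg hθ.1]
    ring
  have hcosne : ∀ θ ∈ Set.uIcc (0:ℝ) a, Real.cos θ ≠ 0 := by
    intro θ hθ
    rw [Set.uIcc_of_le ha0.le] at hθ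
    exact (Real.cos_pos_of_mem_Ioo ⟨by linarith [hθ.1], by linarith [hθ.2]⟩).ne'
  have hparts : (∫ θ in (0:ℝ)..a, F θ * (1 / Real.cos θ ^ 2))
      = F a * Real.tan a - F 0 * Real.tan 0
        - ∫ θ in (0:ℝ)..a, (-(θ ^ k * Real.sin θ * Real.cos θ)) * Real.tan θ := by
    apply intervalIntegral.integral_mul_deriv_eq_deriv_mul
    · exact fun x _ => F_hasDerivAt k x
    · exact fun x hx => Real.hasDerivAt_tan (hcosne x hx)
    · exact ((aux_cont k).neg.intervalIntegrable _ _)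
    · apply ContinuousOn.intervalIntegrable
      apply ContinuousOn.div continuousOn_const (by fun_prop)
      intro x hx
      exact pow_ne_zero 2 (hcosne x hx)
  have hlast : (∫ θ in (0:ℝ)..a, (-(θ ^ k * Real.sin θ * Real.cos θ)) * Real.tan θ) = -S := by
    rw [hS, ← intervalIntegral.integral_neg]
    apply intervalIntegral.integral_congr
    intro θ hθ
    have hc := hcosne θ hθ
    show -(θ ^ k * Real.sin θ * Real.cos θ) * Real.tan θ = -(θ ^ k * Real.sin θ ^ 2)
    rw [Real.tan_eq_sin_div_cos]
    field_simp
  have hH04 : (∫ θ in (0:ℝ)..a, H θ) = F a * Real.tan a + S := by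
    rw [hstep4, hparts, hlast, Real.tan_zero]
    ring
  -- step 5: compute the pdf side
  have hcospin : Real.cos (Real.pi / n) ≠ 0 := by rw [← ha]; exact hcosa.ne'
  have hpdfc : Continuous (pdfF n) := by
    unfold pdfF
    apply Continuous.if_le (by fun_prop) (by fun_prop) continuous_id continuous_const
    intro x hx
    subst hx
    rw [Real.tan_eq_sin_div_cos]
    field_simp
  have hxkpdf : Continuous (fun x => x ^ k * pdfF n x) := by fun_prop
  have hrsplit : (∫ x in (0:ℝ)..(Real.pi/2), x ^ k * pdfF n x)
      = (∫ x in (0:ℝ)..a, x ^ k * pdfF n x) + ∫ x in a..(Real.pi/2), x ^ k * pdfF n x :=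
    (intervalIntegral.integral_add_adjacent_intervals
      (hxkpdf.intervalIntegrable _ _) (hxkpdf.intervalIntegrable _ _)).symm
  have hr1 : (∫ x in (0:ℝ)..a, x ^ k * pdfF n x)
      = (2 * n / Real.pi) * S := by
    have : (∫ x in (0:ℝ)..a, x ^ k * pdfF n x)
        = ∫ x in (0:ℝ)..a, (2 * n / Real.pi) * (x ^ k * Real.sin x ^ 2) := by
      apply intervalIntegral.integral_congr
      intro x hx
      rw [Set.uIcc_of_le ha0.le] at hx
      simp only [pdfF]
      rw [if_pos (by rw [← ha]; exact hx.2)]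
      ring
    rw [this, intervalIntegral.integral_const_mul, hS]
  have hr2 : (∫ x in a..(Real.pi/2), x ^ k * pdfF n x)
      = (2 * n / Real.pi) * Real.tan a * F a := by
    have : (∫ x in a..(Real.pi/2), x ^ k * pdfF n x)
        = ∫ x in a..(Real.pi/2),
            ((2 * n / Real.pi) * Real.tan a) * (x ^ k * Real.sin x * Real.cos x) := by
      apply intervalIntegral.integral_congr
      intro x hx
      rw [Set.uIcc_of_le ha2.le] at hx
      simp only [pdfF]
      by_cases hxa : x ≤ Real.pi / n
      · have hxea : x = a := le_antisymm (by rw [ha]; exact hxa) hx.1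
        rw [if_pos hxa, hxea, Real.tan_eq_sin_div_cos]
        field_simp
      · rw [if_neg hxa, ← ha]
        ring
    rw [this, intervalIntegral.integral_const_mul, hF]
  -- final assembly
  rw [hsplit, heven, hH04, hrsplit, hr1, hr2]
  have hπ0 : Real.pi ≠ 0 := hπ.ne'
  have hn0' : (n:ℝ) ≠ 0 := hn0.ne'
  rw [smul_eq_mul, ha]
  field_simp
  ring
end
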